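/- Let (Ω, 𝓕, P) be a probability space, let (𝓕_t)_{t=0}^{n} be a filtration, let A_1, …, A_n be events with A_t ∈ 𝓕_t for each t, and let p₀ ∈ (0, 1/4] be such that for every t ∈ {1, …, n}, E[1_{A_t} ∣ 𝓕_{t−1}] ≤ p₀ almost surely. Then P( ∑_{t=1}^{n} 1_{A_t} ≥ n/4 ) ≤ exp( −n · kl(1/4, p₀) ). -/

import Mathlib

open MeasureTheory

/-- Kullback–Leibler divergence between Bernoulli distributions of parameters `p` and `q`
(the convention `0 · log(0/x) = 0` holds automatically since `0 * x = 0` in `ℝ`). -/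
noncomputable def klBer (p q : ℝ) : ℝ :=
  p * Real.log (p / q) + (1 - p) * Real.log ((1 - p) / (1 - q))

section Aux

variable {Ω : Type*} [m0 : MeasurableSpace Ω]

lemma chernoff_indicator_cases (A : Set Ω) (ω : Ω) :
    A.indicator (fun _ => (1 : ℝ)) ω = 0 ∨ A.indicator (fun _ => (1 : ℝ)) ω = 1 := by
  by_cases h : ω ∈ A
  · right; simp [Set.indicator_of_mem h]
  · left; simp [Set.indicator_of_notMem h]

lemma chernoff_prod_eq_rpow (c : ℝ) (hc : 0 < c) (s : Finset ℕ) (f : ℕ → ℝ)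
    (hf : ∀ t, f t = 0 ∨ f t = 1) :
    ∏ t ∈ s, (1 + (c - 1) * f t) = c ^ (∑ t ∈ s, f t) := by
  classical
  induction s using Finset.induction_on with
  | empty => simp
  | insert a s ha ih =>
    rw [Finset.prod_insert ha, Finset.sum_insert ha, Real.rpow_add hc, ih]
    congr 1
    rcases hf a with h | h <;> simp [h]

/-- Main induction: bound on the integral of the product martingale-like quantity. -/
lemma chernoff_aux (P : Measure Ω) [IsProbabilityMeasure P]
    (n : ℕ) (ℱ : Filtration ℕ m0) (A : ℕ → Set Ω)
    (hA : ∀ t, 1 ≤ t → t ≤ n → MeasurableSet[ℱ t] (A t))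
    (c : ℝ) (hc : 1 ≤ c)
    (p0 : ℝ) (hp0 : 0 < p0)
    (hcond : ∀ t, 1 ≤ t → t ≤ n →
      ∀ᵐ ω ∂P, (MeasureTheory.condExp (ℱ (t - 1)) P
        ((A t).indicator (fun _ => (1 : ℝ)))) ω ≤ p0) :
    ∀ k, k ≤ n →
      ∫ ω, ∏ t ∈ Finset.Icc 1 k, (1 + (c - 1) * (A t).indicator (fun _ => (1 : ℝ)) ω) ∂P
        ≤ (1 + (c - 1) * p0) ^ k := by
  set g : ℕ → Ω → ℝ := fun t ω => (A t).indicator (fun _ => (1 : ℝ)) ω with hg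
  have hg01 : ∀ t ω, 0 ≤ g t ω ∧ g t ω ≤ 1 := by
    intro t ω
    rcases chernoff_indicator_cases (A t) ω with h | h <;> rw [hg] <;> simp [h]
  have hfac : ∀ t ω, 1 ≤ 1 + (c - 1) * g t ω ∧ 1 + (c - 1) * g t ω ≤ c := by
    intro t ω
    obtain ⟨h0, h1⟩ := hg01 t ω
    constructor <;> nlinarith
  set Y : ℕ → Ω → ℝ := fun k ω => ∏ t ∈ Finset.Icc 1 k, (1 + (c - 1) * g t ω) with hY
  have hY1 : ∀ k ω, 1 ≤ Y k ω := by
    intro k ω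
    simp only [hY]
    calc (1:ℝ) = ∏ _t ∈ Finset.Icc 1 k, (1:ℝ) := by simp
      _ ≤ _ := Finset.prod_le_prod (fun t _ => zero_le_one) (fun t _ => (hfac t ω).1)
  have hYc : ∀ k ω, Y k ω ≤ c ^ k := by
    intro k ω
    calc Y k ω ≤ ∏ t ∈ Finset.Icc 1 k, c := by
          refine Finset.prod_le_prod ?_ ?_
          · intro t _; linarith [(hfac t ω).1]
          · intro t _; exact (hfac t ω).2
      _ = c ^ k := by rw [Finset.prod_const, Nat.card_Icc]; norm_num
  have hsmY : ∀ k, k ≤ n → StronglyMeasurable[ℱ k] (Y k) := by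
    intro k hk
    refine Finset.stronglyMeasurable_fun_prod _ ?_
    intro t ht
    simp only [Finset.mem_Icc] at ht
    have h1 : StronglyMeasurable[ℱ t] (g t) :=
      stronglyMeasurable_const.indicator (hA t ht.1 (ht.2.trans hk))
    exact stronglyMeasurable_const.add
      (stronglyMeasurable_const.mul (h1.mono (ℱ.mono ht.2)))
  have hintY : ∀ k, k ≤ n → Integrable (Y k) P := by
    intro k hk
    refine Integrable.mono' (integrable_const (c ^ k))
      ((hsmY k hk).mono (ℱ.le k)).aestronglyMeasurable ?_
    filter_upwards with ω
    rw [Real.norm_eq_abs, abs_of_nonneg (by linarith [hY1 k ω])]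
    exact hYc k ω
  have hintg : ∀ t, 1 ≤ t → t ≤ n → Integrable (g t) P := by
    intro t h1 h2
    exact (integrable_const (1 : ℝ)).indicator (ℱ.le t _ (hA t h1 h2))
  intro k
  induction k with
  | zero => intro _; simp
  | succ k ih =>
    intro hk1
    have hkn : k ≤ n := by omega
    have hk1n : 1 ≤ k + 1 := by omega
    have ihk := ih hkn
    -- split off the last factor
    have hsplit : ∀ ω, (∏ t ∈ Finset.Icc 1 (k + 1), (1 + (c - 1) * g t ω))
        = Y k ω + (c - 1) * (Y k ω * g (k + 1) ω) := by
      intro ω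
      rw [Finset.prod_Icc_succ_top (Nat.le_add_left 1 k)]
      ring
    change ∫ ω, (∏ t ∈ Finset.Icc 1 (k + 1), (1 + (c - 1) * g t ω)) ∂P ≤ _
    simp only [hsplit]
    -- integrability facts
    have hintYg : Integrable (fun ω => Y k ω * g (k + 1) ω) P := by
      refine Integrable.bdd_mul (hintg (k + 1) (by omega) hk1)
        ((hsmY k hkn).mono (ℱ.le k)).aestronglyMeasurable (c := c ^ k) (Filter.Eventually.of_forall ?_)
      intro ω
      rw [Real.norm_eq_abs, abs_of_nonneg (by linarith [hY1 k ω])]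
      exact hYc k ω
    rw [integral_add (hintY k hkn) (hintYg.const_mul _), integral_const_mul]
    -- the conditional expectation step
    have hpull : MeasureTheory.condExp (ℱ k) P (fun ω => Y k ω * g (k + 1) ω)
        =ᵐ[P] fun ω => Y k ω * (MeasureTheory.condExp (ℱ k) P (g (k + 1))) ω :=
      condExp_mul_of_stronglyMeasurable_left (hsmY k hkn) hintYg
        (hintg (k + 1) (by omega) hk1)
    have hce := hcond (k + 1) (by omega) hk1
    simp only [Nat.add_sub_cancel] at hce
    have hkey : ∫ ω, Y k ω * g (k + 1) ω ∂P ≤ p0 * ∫ ω, Y k ω ∂P := by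
      have h1 : ∫ ω, Y k ω * g (k + 1) ω ∂P
          = ∫ ω, Y k ω * (MeasureTheory.condExp (ℱ k) P (g (k + 1))) ω ∂P := by
        rw [← integral_condExp (ℱ.le k)]
        exact integral_congr_ae hpull
      rw [h1]
      have h2 : ∫ ω, Y k ω * p0 ∂P = p0 * ∫ ω, Y k ω ∂P := by
        rw [integral_mul_const]; ring
      rw [← h2]
      refine integral_mono_ae ?_ ((hintY k hkn).mul_const p0) ?_
      · refine Integrable.bdd_mul integrable_condExp
          ((hsmY k hkn).mono (ℱ.le k)).aestronglyMeasurable (c := c ^ k) (Filter.Eventually.of_forall ?_)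
        intro ω
        rw [Real.norm_eq_abs, abs_of_nonneg (by linarith [hY1 k ω])]
        exact hYc k ω
      · filter_upwards [hce] with ω hω
        exact mul_le_mul_of_nonneg_left hω (by linarith [hY1 k ω])
    have hYnonneg : 0 ≤ ∫ ω, Y k ω ∂P :=
      integral_nonneg fun ω => le_trans zero_le_one (hY1 k ω)
    have hB : (0:ℝ) ≤ 1 + (c - 1) * p0 := by nlinarith
    calc (∫ ω, Y k ω ∂P) + (c - 1) * ∫ ω, Y k ω * g (k + 1) ω ∂P
        ≤ (∫ ω, Y k ω ∂P) + (c - 1) * (p0 * ∫ ω, Y k ω ∂P) := by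
          have := mul_le_mul_of_nonneg_left hkey (by linarith : (0:ℝ) ≤ c - 1)
          linarith
      _ = (1 + (c - 1) * p0) * ∫ ω, Y k ω ∂P := by ring
      _ ≤ (1 + (c - 1) * p0) * (1 + (c - 1) * p0) ^ k :=
          mul_le_mul_of_nonneg_left ihk hB
      _ = (1 + (c - 1) * p0) ^ (k + 1) := by ring

end Aux

/-- Chernoff bound on the number of bad rounds (Lemma 6): if each event `A t` is
`𝓕 t`-measurable and has conditional probability at most `p₀ ≤ 1/4` given `𝓕 (t−1)`, then
the probability that at least `n/4` of the events occur is at most `exp(−n·kl(1/4, p₀))`. -/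
theorem chernoff_bad_rounds
    {Ω : Type*} [m0 : MeasurableSpace Ω] (P : Measure Ω) [IsProbabilityMeasure P]
    (n : ℕ) (hn : 1 ≤ n) (ℱ : Filtration ℕ m0) (A : ℕ → Set Ω)
    (hA : ∀ t, 1 ≤ t → t ≤ n → MeasurableSet[ℱ t] (A t))
    (p0 : ℝ) (hp0 : p0 ∈ Set.Ioc (0 : ℝ) (1 / 4))
    (hcond : ∀ t, 1 ≤ t → t ≤ n →
      ∀ᵐ ω ∂P, (MeasureTheory.condExp (ℱ (t - 1)) P
        ((A t).indicator (fun _ => (1 : ℝ)))) ω ≤ p0) :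
    P {ω | (n : ℝ) / 4 ≤ ∑ t ∈ Finset.Icc 1 n, (A t).indicator (fun _ => (1 : ℝ)) ω} ≤
      ENNReal.ofReal (Real.exp (-(n : ℝ) * klBer (1 / 4) p0)) := by
  obtain ⟨hp0pos, hp0le⟩ := hp0
  have hp0lt1 : p0 < 1 := by linarith
  set c : ℝ := (1 - p0) / (3 * p0) with hcdef
  have hcpos : 0 < c := div_pos (by linarith) (by linarith)
  have hc : 1 ≤ c := by
    rw [hcdef, le_div_iff₀ (by positivity)]
    linarith
  set g : ℕ → Ω → ℝ := fun t ω => (A t).indicator (fun _ => (1 : ℝ)) ω with hgdef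
  set S : Ω → ℝ := fun ω => ∑ t ∈ Finset.Icc 1 n, g t ω with hSdef
  set Y : Ω → ℝ := fun ω => ∏ t ∈ Finset.Icc 1 n, (1 + (c - 1) * g t ω) with hYdef
  -- Y ω = c ^ S ω  (rpow)
  have hYrpow : ∀ ω, Y ω = c ^ S ω := by
    intro ω
    simp only [hYdef, hSdef]
    exact chernoff_prod_eq_rpow c hcpos _ _ fun t => chernoff_indicator_cases (A t) ω
  -- set inclusion
  have hsub : {ω | (n : ℝ) / 4 ≤ S ω} ⊆ {ω | c ^ ((n : ℝ) / 4) ≤ Y ω} := by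
    intro ω hω
    simp only [Set.mem_setOf_eq] at hω ⊢
    rw [hYrpow ω]
    exact Real.rpow_le_rpow_of_exponent_le hc hω
  -- integral bound
  have hint : ∫ ω, Y ω ∂P ≤ (1 + (c - 1) * p0) ^ n :=
    chernoff_aux P n ℱ A hA c hc p0 hp0pos hcond n le_rfl
  -- integrability of Y (re-derive)
  have hfac : ∀ t (ω : Ω), 1 ≤ 1 + (c - 1) * g t ω ∧ 1 + (c - 1) * g t ω ≤ c := by
    intro t ω
    rcases chernoff_indicator_cases (A t) ω with h | h <;>
      · constructor <;> · simp only [hgdef, h]; nlinarith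
  have hY1 : ∀ ω, 1 ≤ Y ω := by
    intro ω
    simp only [hYdef]
    calc (1:ℝ) = ∏ _t ∈ Finset.Icc 1 n, (1:ℝ) := by simp
      _ ≤ _ := Finset.prod_le_prod (fun t _ => zero_le_one) (fun t _ => (hfac t ω).1)
  have hYc : ∀ ω, Y ω ≤ c ^ n := by
    intro ω
    calc Y ω ≤ ∏ t ∈ Finset.Icc 1 n, c := by
          refine Finset.prod_le_prod (fun t _ => by linarith [(hfac t ω).1])
            (fun t _ => (hfac t ω).2)
      _ = c ^ n := by rw [Finset.prod_const, Nat.card_Icc]; norm_num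
  have hYmeas : AEStronglyMeasurable Y P := by
    refine (Finset.stronglyMeasurable_fun_prod _ ?_).aestronglyMeasurable
    intro t ht
    simp only [Finset.mem_Icc] at ht
    exact stronglyMeasurable_const.add
      (stronglyMeasurable_const.mul
        ((stronglyMeasurable_const.indicator (ℱ.le t _ (hA t ht.1 ht.2)))))
  have hYint : Integrable Y P := by
    refine Integrable.mono' (integrable_const (c ^ n)) hYmeas ?_
    filter_upwards with ω
    rw [Real.norm_eq_abs, abs_of_nonneg (by linarith [hY1 ω])]
    exact hYc ω
  -- Markov
  set ε : ℝ := c ^ ((n : ℝ) / 4) with hεdef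
  have hεpos : 0 < ε := Real.rpow_pos_of_pos hcpos _
  have hmarkov : ε * (P {ω | ε ≤ Y ω}).toReal ≤ ∫ ω, Y ω ∂P :=
    mul_meas_ge_le_integral_of_nonneg
      (Filter.Eventually.of_forall fun ω => le_trans zero_le_one (hY1 ω)) hYint ε
  have hPle : (P {ω | ε ≤ Y ω}).toReal ≤ ((1 + (c - 1) * p0) ^ n) / ε := by
    rw [le_div_iff₀ hεpos]
    calc (P {ω | ε ≤ Y ω}).toReal * ε = ε * (P {ω | ε ≤ Y ω}).toReal := by ring
      _ ≤ ∫ ω, Y ω ∂P := hmarkov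
      _ ≤ (1 + (c - 1) * p0) ^ n := hint
  -- identify the bound with exp(-n * kl)
  have hbound : ((1 + (c - 1) * p0) ^ n) / ε = Real.exp (-(n : ℝ) * klBer (1 / 4) p0) := by
    have hB : 1 + (c - 1) * p0 = 4 * (1 - p0) / 3 := by
      rw [hcdef]; field_simp; ring
    have hBpos : (0:ℝ) < 4 * (1 - p0) / 3 := by linarith
    rw [hB, hεdef]
    rw [← Real.exp_log (x := (4 * (1 - p0) / 3) ^ n) (pow_pos hBpos n),
      ← Real.exp_log (x := c ^ ((n:ℝ)/4)) (Real.rpow_pos_of_pos hcpos _),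
      ← Real.exp_sub]
    congr 1
    rw [Real.log_pow, Real.log_rpow hcpos, hcdef]
    have hne1 : (1:ℝ) - p0 ≠ 0 := ne_of_gt (by linarith)
    have hnep : p0 ≠ 0 := ne_of_gt hp0pos
    have h3 : Real.log (4 * (1 - p0) / 3) = Real.log 4 + Real.log (1 - p0) - Real.log 3 := by
      rw [Real.log_div (by positivity) (by norm_num), Real.log_mul (by norm_num) hne1]
    have h4 : Real.log ((1 - p0) / (3 * p0)) = Real.log (1 - p0) - (Real.log 3 + Real.log p0) := by
      rw [Real.log_div hne1 (by positivity), Real.log_mul (by norm_num) hnep]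
    have h5 : klBer (1 / 4) p0
        = (1/4) * (- Real.log 4 - Real.log p0)
          + (3/4) * (Real.log 3 - Real.log 4 - Real.log (1 - p0)) := by
      unfold klBer
      have e1 : Real.log ((1:ℝ)/4 / p0) = - Real.log 4 - Real.log p0 := by
        rw [Real.log_div (by norm_num) hnep, Real.log_div one_ne_zero (by norm_num),
          Real.log_one]
        ring
      have e2 : Real.log ((1 - (1:ℝ)/4) / (1 - p0))
          = Real.log 3 - Real.log 4 - Real.log (1 - p0) := by
        rw [show (1 - (1:ℝ)/4) = 3/4 by norm_num,
          Real.log_div (by norm_num) hne1, Real.log_div (by norm_num) (by norm_num)]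
        try ring
      rw [e1, e2]
      ring
    rw [h3, h4, h5]
    try ring
  rw [← hbound]
  calc P {ω | (n : ℝ) / 4 ≤ S ω} ≤ P {ω | ε ≤ Y ω} := measure_mono hsub
    _ ≤ ENNReal.ofReal (((1 + (c - 1) * p0) ^ n) / ε) := by
        rw [← ENNReal.ofReal_toReal (measure_ne_top P _)]
        exact ENNReal.ofReal_le_ofReal hPle
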